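/- Let 𝒞^l := {(a,b) ∈ ℝ^l × ℝ^l : a ≥ 0, b ≥ 0, ⟨a,b⟩ = 0} be the complementarity cone. For every (a,b) ∈ 𝒞^l, the limiting normal cone to 𝒞^l at (a,b) equals {(α,β) ∈ ℝ^l × ℝ^l : α_i = 0 for every i with a_i > 0; β_i = 0 for every i with b_i > 0; and for every i with a_i = b_i = 0, either (α_i < 0 and β_i < 0) or α_i β_i = 0}. -/

import Mathlib

open scoped RealInnerProductSpace Pointwise ENNReal
open Filter Topology MeasureTheory

noncomputable section

/-- `ℝ^n` with the Euclidean structure. -/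
abbrev V (n : ℕ) : Type := EuclideanSpace ℝ (Fin n)

/-- The complementarity cone `𝒞^l = {(a,b) : a ≥ 0, b ≥ 0, ⟨a,b⟩ = 0}`. -/
def compCone (l : ℕ) : Set (V l × V l) :=
  {p | (∀ i, 0 ≤ p.1 i) ∧ (∀ i, 0 ≤ p.2 i) ∧ ⟪p.1, p.2⟫ = 0}

/-- Proximal normal cone in an inner product space. -/
def proxNormal {H : Type*} [NormedAddCommGroup H] [InnerProductSpace ℝ H]
    (Ω : Set H) (z : H) : Set H :=
  {v | ∃ σ : ℝ, 0 ≤ σ ∧ ∀ y ∈ Ω, ⟪v, y - z⟫ ≤ σ * ‖y - z‖ ^ 2}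

/-- Limiting (Mordukhovich) normal cone. -/
def limNormal {H : Type*} [NormedAddCommGroup H] [InnerProductSpace ℝ H]
    (Ω : Set H) (z : H) : Set H :=
  {v | ∃ zk vk : ℕ → H, (∀ k, zk k ∈ Ω ∧ vk k ∈ proxNormal Ω (zk k)) ∧
    Tendsto zk atTop (𝓝 z) ∧ Tendsto vk atTop (𝓝 v)}

/-- Clarke normal cone: closed convex hull of the limiting normal cone. -/
def clarkeNormal {H : Type*} [NormedAddCommGroup H] [InnerProductSpace ℝ H]
    (Ω : Set H) (z : H) : Set H :=
  closure (convexHull ℝ (limNormal Ω z))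

/-- Proximal normal cone on a product of inner product spaces (Euclidean/L² pairing). -/
def proxNormalP {H K : Type*} [NormedAddCommGroup H] [InnerProductSpace ℝ H]
    [NormedAddCommGroup K] [InnerProductSpace ℝ K]
    (Ω : Set (H × K)) (z : H × K) : Set (H × K) :=
  {v | ∃ σ : ℝ, 0 ≤ σ ∧ ∀ y ∈ Ω,
    ⟪v.1, y.1 - z.1⟫ + ⟪v.2, y.2 - z.2⟫ ≤ σ * (‖y.1 - z.1‖ ^ 2 + ‖y.2 - z.2‖ ^ 2)}

/-- Limiting normal cone on a product of inner product spaces. -/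
def limNormalP {H K : Type*} [NormedAddCommGroup H] [InnerProductSpace ℝ H]
    [NormedAddCommGroup K] [InnerProductSpace ℝ K]
    (Ω : Set (H × K)) (z : H × K) : Set (H × K) :=
  {v | ∃ zk vk : ℕ → H × K, (∀ k, zk k ∈ Ω ∧ vk k ∈ proxNormalP Ω (zk k)) ∧
    Tendsto zk atTop (𝓝 z) ∧ Tendsto vk atTop (𝓝 v)}

/-- Clarke normal cone on a product. -/
def clarkeNormalP {H K : Type*} [NormedAddCommGroup H] [InnerProductSpace ℝ H]
    [NormedAddCommGroup K] [InnerProductSpace ℝ K]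
    (Ω : Set (H × K)) (z : H × K) : Set (H × K) :=
  closure (convexHull ℝ (limNormalP Ω z))

/-- Limiting subdifferential in an inner product space. -/
def limSubdiff {H : Type*} [NormedAddCommGroup H] [InnerProductSpace ℝ H]
    (φ : H → ℝ) (z : H) : Set H :=
  {v | ∃ zk vk : ℕ → H, Tendsto zk atTop (𝓝 z) ∧ Tendsto vk atTop (𝓝 v) ∧
    ∀ k, 0 ≤ liminf (fun y =>
      (φ y - φ (zk k) - ⟪vk k, y - zk k⟫) / ‖y - zk k‖) (𝓝[≠] (zk k))}

/-- Clarke subdifferential: closed convex hull of the limiting subdifferential. -/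
def clarkeSubdiff {H : Type*} [NormedAddCommGroup H] [InnerProductSpace ℝ H]
    (φ : H → ℝ) (z : H) : Set H :=
  closure (convexHull ℝ (limSubdiff φ z))

/-- Limiting subdifferential on a product of inner product spaces (L² pairing). -/
def limSubdiffP {H K : Type*} [NormedAddCommGroup H] [InnerProductSpace ℝ H]
    [NormedAddCommGroup K] [InnerProductSpace ℝ K]
    (φ : H × K → ℝ) (z : H × K) : Set (H × K) :=
  {v | ∃ zk vk : ℕ → H × K, Tendsto zk atTop (𝓝 z) ∧ Tendsto vk atTop (𝓝 v) ∧
    ∀ k, 0 ≤ liminf (fun y : H × K =>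
      (φ y - φ (zk k) - (⟪(vk k).1, y.1 - (zk k).1⟫ + ⟪(vk k).2, y.2 - (zk k).2⟫)) /
        Real.sqrt (‖y.1 - (zk k).1‖ ^ 2 + ‖y.2 - (zk k).2‖ ^ 2)) (𝓝[≠] (zk k))}

/-- Clarke subdifferential on a product. -/
def clarkeSubdiffP {H K : Type*} [NormedAddCommGroup H] [InnerProductSpace ℝ H]
    [NormedAddCommGroup K] [InnerProductSpace ℝ K]
    (φ : H × K → ℝ) (z : H × K) : Set (H × K) :=
  closure (convexHull ℝ (limSubdiffP φ z))

/-- Euclidean (L²) distance from a pair to a set of pairs. -/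
def distP {H K : Type*} [NormedAddCommGroup H] [NormedAddCommGroup K]
    (p : H × K) (Ω : Set (H × K)) : ℝ :=
  sInf {d : ℝ | ∃ q ∈ Ω, d = Real.sqrt (‖p.1 - q.1‖ ^ 2 + ‖p.2 - q.2‖ ^ 2)}

/-- Gradient of a scalar function on a product, as the pair of partial gradients
(this is the Euclidean gradient of `φ` whenever `φ` is differentiable). -/
def grad2 {H K : Type*} [NormedAddCommGroup H] [InnerProductSpace ℝ H] [CompleteSpace H]
    [NormedAddCommGroup K] [InnerProductSpace ℝ K] [CompleteSpace K]
    (φ : H × K → ℝ) (z : H × K) : H × K :=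
  (gradient (fun x => φ (x, z.2)) z.1, gradient (fun u => φ (z.1, u)) z.2)

namespace AuxLNC
variable {l : ℕ}

lemma norm_sq_eq (x : V l) : ‖x‖ ^ 2 = ∑ i, x i ^ 2 := by
  rw [EuclideanSpace.norm_eq, Real.sq_sqrt (by positivity)]
  simp [Real.norm_eq_abs, sq_abs]

lemma coord_mul_eq_zero {p : V l × V l} (hp : p ∈ compCone l) (i : Fin l) :
    p.1 i * p.2 i = 0 := by
  have hsum : ∑ j, p.1 j * p.2 j = 0 := by
    have h := hp.2.2
    simpa [PiLp.inner_apply, RCLike.inner_apply, conj_trivial, mul_comm] using h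
  exact (Finset.sum_eq_zero_iff_of_nonneg
    (fun j _ => mul_nonneg (hp.1 j) (hp.2.1 j))).mp hsum i (Finset.mem_univ i)

lemma mem_compCone_of (x y : V l) (hx : ∀ i, 0 ≤ x i) (hy : ∀ i, 0 ≤ y i)
    (h : ∀ i, x i * y i = 0) : (x, y) ∈ compCone l := by
  refine ⟨hx, hy, ?_⟩
  simp [PiLp.inner_apply, RCLike.inner_apply, conj_trivial, h]
  exact Finset.sum_eq_zero fun i _ => by rw [mul_comm]; exact h i

lemma le_zero_of_forall (x σ : ℝ) (hσ : 0 ≤ σ) (h : ∀ ε : ℝ, 0 < ε → x ≤ σ * ε) : x ≤ 0 := by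
  by_contra hx
  push_neg at hx
  have h2 := h (x / (2*σ+2)) (by positivity)
  rw [← mul_div_assoc, le_div_iff₀ (by positivity)] at h2
  nlinarith

lemma coordA (c β : ℝ) (hc : 0 < c) :
    ∃ σ, 0 ≤ σ ∧ ∀ y w : ℝ, 0 ≤ y → 0 ≤ w → y * w = 0 →
      β * w ≤ σ * ((y - c) ^ 2 + w ^ 2) := by
  refine ⟨|β| / (2 * c), by positivity, fun y w hy hw hyw => ?_⟩
  rcases mul_eq_zero.mp hyw with h | h
  · subst h
    rw [div_mul_eq_mul_div, le_div_iff₀ (by positivity)]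
    nlinarith [le_abs_self β, abs_nonneg β,
      mul_nonneg (abs_nonneg β) (sq_nonneg (c - w)),
      mul_nonneg (mul_nonneg hc.le hw) (sub_nonneg.mpr (le_abs_self β))]
  · subst h
    have : (0:ℝ) ≤ |β| / (2 * c) * ((y - c) ^ 2 + 0 ^ 2) := by positivity
    linarith

lemma coordB (d α : ℝ) (hd : 0 < d) :
    ∃ σ, 0 ≤ σ ∧ ∀ y w : ℝ, 0 ≤ y → 0 ≤ w → y * w = 0 →
      α * y ≤ σ * (y ^ 2 + (w - d) ^ 2) := by
  obtain ⟨σ, hσ, h⟩ := coordA d α hd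
  refine ⟨σ, hσ, fun y w hy hw hyw => ?_⟩
  have := h w y hw hy (by rw [mul_comm]; exact hyw)
  linarith

lemma prox_mem (z v : V l × V l)
    (h : ∀ i, ∃ σ, 0 ≤ σ ∧ ∀ y w : ℝ, 0 ≤ y → 0 ≤ w → y * w = 0 →
      v.1 i * (y - z.1 i) + v.2 i * (w - z.2 i) ≤ σ * ((y - z.1 i) ^ 2 + (w - z.2 i) ^ 2)) :
    v ∈ proxNormalP (compCone l) z := by
  choose σ hσ hb using h
  refine ⟨∑ i, σ i, Finset.sum_nonneg fun i _ => hσ i, fun y hy => ?_⟩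
  have hin1 : ⟪v.1, y.1 - z.1⟫ = ∑ i, v.1 i * (y.1 i - z.1 i) := by
    simp [PiLp.inner_apply, RCLike.inner_apply, conj_trivial]
    exact Finset.sum_congr rfl fun i _ => mul_comm _ _
  have hin2 : ⟪v.2, y.2 - z.2⟫ = ∑ i, v.2 i * (y.2 i - z.2 i) := by
    simp [PiLp.inner_apply, RCLike.inner_apply, conj_trivial]
    exact Finset.sum_congr rfl fun i _ => mul_comm _ _
  have hn1 : ‖y.1 - z.1‖ ^ 2 = ∑ i, (y.1 i - z.1 i) ^ 2 := by
    rw [norm_sq_eq]; simp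
  have hn2 : ‖y.2 - z.2‖ ^ 2 = ∑ i, (y.2 i - z.2 i) ^ 2 := by
    rw [norm_sq_eq]; simp
  rw [hin1, hin2, hn1, hn2, ← Finset.sum_add_distrib, ← Finset.sum_add_distrib, Finset.mul_sum]
  refine Finset.sum_le_sum fun i _ => ?_
  have key := hb i (y.1 i) (y.2 i) (hy.1 i) (hy.2.1 i) (coord_mul_eq_zero hy i)
  have hle : σ i ≤ ∑ j, σ j := Finset.single_le_sum (fun j _ => hσ j) (Finset.mem_univ i)
  have hq : (0:ℝ) ≤ (y.1 i - z.1 i) ^ 2 + (y.2 i - z.2 i) ^ 2 := by positivity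
  calc v.1 i * (y.1 i - z.1 i) + v.2 i * (y.2 i - z.2 i)
      ≤ σ i * ((y.1 i - z.1 i) ^ 2 + (y.2 i - z.2 i) ^ 2) := key
    _ ≤ (∑ j, σ j) * ((y.1 i - z.1 i) ^ 2 + (y.2 i - z.2 i) ^ 2) :=
        mul_le_mul_of_nonneg_right hle hq


lemma prox_nec {z v : V l × V l} (hz : z ∈ compCone l)
    (hv : v ∈ proxNormalP (compCone l) z) (i : Fin l) :
    (0 < z.1 i → v.1 i = 0) ∧ (0 < z.2 i → v.2 i = 0) ∧
    (z.1 i = 0 → z.2 i = 0 → v.1 i ≤ 0 ∧ v.2 i ≤ 0) := by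
  obtain ⟨σ, hσ, H⟩ := hv
  have key1 : ∀ s : ℝ, 0 ≤ z.1 i + s → s * z.2 i = 0 → s * v.1 i ≤ σ * s ^ 2 := by
    intro s hs hsz
    have hmem : ((z.1 + s • EuclideanSpace.single i (1:ℝ), z.2) : V l × V l) ∈ compCone l := by
      refine ⟨fun j => ?_, hz.2.1, ?_⟩
      · by_cases hj : j = i
        · subst hj; simpa [EuclideanSpace.single_apply] using hs
        · simpa [EuclideanSpace.single_apply, hj] using hz.1 j
      · have h1 : ⟪z.1 + s • EuclideanSpace.single i (1:ℝ), z.2⟫ = ⟪z.1, z.2⟫ + s * z.2 i := by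
          simp [inner_add_left, real_inner_smul_left, EuclideanSpace.inner_single_left]
        rw [h1, hz.2.2, hsz, add_zero]
    have h2 := H _ hmem
    simp only [add_sub_cancel_left, sub_self] at h2
    rw [real_inner_smul_right, inner_zero_right] at h2
    have he : ⟪v.1, EuclideanSpace.single i (1:ℝ)⟫ = v.1 i := by
      rw [real_inner_comm]
      simp [EuclideanSpace.inner_single_left]
    rw [he] at h2
    have hn : ‖s • EuclideanSpace.single i (1:ℝ)‖ ^ 2 = s ^ 2 := by
      rw [norm_smul]
      simp [EuclideanSpace.norm_single, Real.norm_eq_abs, mul_pow, sq_abs]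
    rw [hn] at h2
    simpa using h2
  have key2 : ∀ s : ℝ, 0 ≤ z.2 i + s → s * z.1 i = 0 → s * v.2 i ≤ σ * s ^ 2 := by
    intro s hs hsz
    have hmem : ((z.1, z.2 + s • EuclideanSpace.single i (1:ℝ)) : V l × V l) ∈ compCone l := by
      refine ⟨hz.1, fun j => ?_, ?_⟩
      · by_cases hj : j = i
        · subst hj; simpa [EuclideanSpace.single_apply] using hs
        · simpa [EuclideanSpace.single_apply, hj] using hz.2.1 j
      · have h1 : ⟪z.1, z.2 + s • EuclideanSpace.single i (1:ℝ)⟫ = ⟪z.1, z.2⟫ + s * z.1 i := by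
          rw [inner_add_right, real_inner_smul_right]
          congr 1
          rw [real_inner_comm]
          simp [EuclideanSpace.inner_single_left]
        rw [h1, hz.2.2, hsz, add_zero]
    have h2 := H _ hmem
    simp only [add_sub_cancel_left, sub_self] at h2
    rw [real_inner_smul_right, inner_zero_right] at h2
    have he : ⟪v.2, EuclideanSpace.single i (1:ℝ)⟫ = v.2 i := by
      rw [real_inner_comm]
      simp [EuclideanSpace.inner_single_left]
    rw [he] at h2
    have hn : ‖s • EuclideanSpace.single i (1:ℝ)‖ ^ 2 = s ^ 2 := by
      rw [norm_smul]
      simp [EuclideanSpace.norm_single, Real.norm_eq_abs, mul_pow, sq_abs]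
    rw [hn] at h2
    simpa using h2
  have hprod := coord_mul_eq_zero hz i
  refine ⟨?_, ?_, ?_⟩
  · intro hc
    have hd : z.2 i = 0 := by
      rcases mul_eq_zero.mp hprod with h | h
      · exact absurd h hc.ne'
      · exact h
    have hle : v.1 i ≤ 0 := by
      refine le_zero_of_forall _ σ hσ fun ε hε => ?_
      have := key1 ε (by linarith) (by rw [hd, mul_zero])
      nlinarith
    have hge : 0 ≤ v.1 i := by
      have h0 : -v.1 i ≤ 0 := by
        refine le_zero_of_forall _ σ hσ fun ε hε => ?_
        set m := min (z.1 i) ε with hm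
        have hm0 : 0 < m := lt_min hc hε
        have hmε : m ≤ ε := min_le_right _ _
        have hkey := key1 (-m) (by simp only [hm]; have := min_le_left (z.1 i) ε; linarith)
          (by rw [hd, mul_zero])
        nlinarith [mul_nonneg hσ (mul_nonneg hm0.le (sub_nonneg.mpr hmε))]
      linarith
    linarith
  · intro hc
    have hd : z.1 i = 0 := by
      rcases mul_eq_zero.mp hprod with h | h
      · exact h
      · exact absurd h hc.ne'
    have hle : v.2 i ≤ 0 := by
      refine le_zero_of_forall _ σ hσ fun ε hε => ?_
      have := key2 ε (by linarith) (by rw [hd, mul_zero])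
      nlinarith
    have hge : 0 ≤ v.2 i := by
      have h0 : -v.2 i ≤ 0 := by
        refine le_zero_of_forall _ σ hσ fun ε hε => ?_
        set m := min (z.2 i) ε with hm
        have hm0 : 0 < m := lt_min hc hε
        have hmε : m ≤ ε := min_le_right _ _
        have hkey := key2 (-m) (by simp only [hm]; have := min_le_left (z.2 i) ε; linarith)
          (by rw [hd, mul_zero])
        nlinarith [mul_nonneg hσ (mul_nonneg hm0.le (sub_nonneg.mpr hmε))]
      linarith
    linarith
  · intro h1 h2
    constructor
    · refine le_zero_of_forall _ σ hσ fun ε hε => ?_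
      have := key1 ε (by rw [h1]; linarith) (by rw [h2, mul_zero])
      nlinarith
    · refine le_zero_of_forall _ σ hσ fun ε hε => ?_
      have := key2 ε (by rw [h2]; linarith) (by rw [h1, mul_zero])
      nlinarith

lemma tendsto_euclidean {f : ℕ → V l} {x : V l}
    (h : ∀ i, Tendsto (fun k => f k i) atTop (𝓝 (x i))) : Tendsto f atTop (𝓝 x) := by
  have hc := (PiLp.continuous_toLp 2 (fun _ : Fin l => ℝ)).tendsto (WithLp.equiv 2 _ x)
  exact hc.comp (tendsto_pi_nhds.mpr h)


lemma lim_frequently {f : ℕ → ℝ} {c : ℝ} (hf : Tendsto f atTop (𝓝 c)) {P : ℕ → Prop}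
    (hS : ∃ᶠ k in atTop, P k) (h0 : ∀ k, P k → f k = 0) : c = 0 := by
  haveI : (atTop ⊓ 𝓟 {k | P k}).NeBot := frequently_iff_neBot.mp hS
  refine tendsto_nhds_unique
    (hf.mono_left (inf_le_left : atTop ⊓ 𝓟 {k | P k} ≤ atTop)) ?_
  refine Tendsto.congr' ?_ tendsto_const_nhds
  exact eventually_inf_principal.mpr (Eventually.of_forall fun k hk => (h0 k hk).symm)


end AuxLNC

open AuxLNC in
/-- Expression for the limiting normal cone of the complementarity
cone `𝒞^l` at any of its points. -/
theorem limNormal_compCone (l : ℕ) (a b : V l) (hab : (a, b) ∈ compCone l) :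
    limNormalP (compCone l) (a, b) =
      {p : V l × V l |
        (∀ i, 0 < a i → p.1 i = 0) ∧ (∀ i, 0 < b i → p.2 i = 0) ∧
        (∀ i, a i = 0 → b i = 0 → (p.1 i < 0 ∧ p.2 i < 0) ∨ p.1 i * p.2 i = 0)} := by

  ext p
  constructor
  · rintro ⟨zk, vk, hk, hzt, hvt⟩
    have hz1t : ∀ i, Tendsto (fun k => (zk k).1 i) atTop (𝓝 (a i)) := fun i =>
      ((EuclideanSpace.proj i).continuous.tendsto _).comp ((continuous_fst.tendsto _).comp hzt)
    have hz2t : ∀ i, Tendsto (fun k => (zk k).2 i) atTop (𝓝 (b i)) := fun i =>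
      ((EuclideanSpace.proj i).continuous.tendsto _).comp ((continuous_snd.tendsto _).comp hzt)
    have hv1t : ∀ i, Tendsto (fun k => (vk k).1 i) atTop (𝓝 (p.1 i)) := fun i =>
      ((EuclideanSpace.proj i).continuous.tendsto _).comp ((continuous_fst.tendsto _).comp hvt)
    have hv2t : ∀ i, Tendsto (fun k => (vk k).2 i) atTop (𝓝 (p.2 i)) := fun i =>
      ((EuclideanSpace.proj i).continuous.tendsto _).comp ((continuous_snd.tendsto _).comp hvt)
    refine ⟨fun i hai => ?_, fun i hbi => ?_, fun i ha0 hb0 => ?_⟩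
    · have hev : ∀ᶠ k in atTop, 0 < (zk k).1 i := (hz1t i).eventually (eventually_gt_nhds hai)
      have hev0 : ∀ᶠ k in atTop, (vk k).1 i = 0 :=
        hev.mono fun k hk' => (prox_nec (hk k).1 (hk k).2 i).1 hk'
      exact tendsto_nhds_unique (hv1t i)
        (Tendsto.congr' (hev0.mono fun k h => h.symm) tendsto_const_nhds)
    · have hev : ∀ᶠ k in atTop, 0 < (zk k).2 i := (hz2t i).eventually (eventually_gt_nhds hbi)
      have hev0 : ∀ᶠ k in atTop, (vk k).2 i = 0 :=
        hev.mono fun k hk' => (prox_nec (hk k).1 (hk k).2 i).2.1 hk'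
      exact tendsto_nhds_unique (hv2t i)
        (Tendsto.congr' (hev0.mono fun k h => h.symm) tendsto_const_nhds)
    · by_cases H1 : ∃ᶠ k in atTop, 0 < (zk k).1 i
      · right
        have hp1 : p.1 i = 0 := lim_frequently (hv1t i) H1
          (fun k hk' => (prox_nec (hk k).1 (hk k).2 i).1 hk')
        rw [hp1, zero_mul]
      · by_cases H2 : ∃ᶠ k in atTop, 0 < (zk k).2 i
        · right
          have hp2 : p.2 i = 0 := lim_frequently (hv2t i) H2
            (fun k hk' => (prox_nec (hk k).1 (hk k).2 i).2.1 hk')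
          rw [hp2, mul_zero]
        · have hc0 : ∀ᶠ k in atTop, ¬ 0 < (zk k).1 i := not_frequently.mp H1
          have hd0 : ∀ᶠ k in atTop, ¬ 0 < (zk k).2 i := not_frequently.mp H2
          have e1 : ∀ᶠ k in atTop, (vk k).1 i ≤ 0 ∧ (vk k).2 i ≤ 0 := by
            filter_upwards [hc0, hd0] with k h1 h2
            exact (prox_nec (hk k).1 (hk k).2 i).2.2
              (le_antisymm (not_lt.mp h1) ((hk k).1.1 i))
              (le_antisymm (not_lt.mp h2) ((hk k).1.2.1 i))
          have l1 : p.1 i ≤ 0 := le_of_tendsto (hv1t i) (e1.mono fun k h => h.1)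
          have l2 : p.2 i ≤ 0 := le_of_tendsto (hv2t i) (e1.mono fun k h => h.2)
          rcases eq_or_lt_of_le l1 with h1 | h1
          · right; rw [h1, zero_mul]
          · rcases eq_or_lt_of_le l2 with h2 | h2
            · right; rw [h2, mul_zero]
            · left; exact ⟨h1, h2⟩
  · rintro ⟨h1, h2, h3⟩
    classical
    set t : ℕ → ℝ := fun k => 1 / ((k : ℝ) + 1) with ht_def
    have ht : ∀ k, 0 < t k := fun k => by positivity
    have htt : Tendsto t atTop (𝓝 0) := tendsto_one_div_add_atTop_nhds_zero_nat
    have hcoord : ∀ i : Fin l, ∃ c d : ℕ → ℝ, (∀ k, 0 ≤ c k) ∧ (∀ k, 0 ≤ d k) ∧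
        (∀ k, c k * d k = 0) ∧ Tendsto c atTop (𝓝 (a i)) ∧ Tendsto d atTop (𝓝 (b i)) ∧
        ∀ k, ∃ σ, 0 ≤ σ ∧ ∀ y w : ℝ, 0 ≤ y → 0 ≤ w → y * w = 0 →
          p.1 i * (y - c k) + p.2 i * (w - d k) ≤ σ * ((y - c k) ^ 2 + (w - d k) ^ 2) := by
      intro i
      have hprod := coord_mul_eq_zero hab i
      by_cases hai : 0 < a i
      · have hbi : b i = 0 := by
          rcases mul_eq_zero.mp hprod with h | h
          · exact absurd h hai.ne'
          · exact h
        have hp1 : p.1 i = 0 := h1 i hai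
        refine ⟨fun _ => a i, fun _ => 0, fun _ => (hab.1 i), fun _ => le_refl 0,
          fun _ => mul_zero _, tendsto_const_nhds, by rw [hbi]; exact tendsto_const_nhds,
          fun k => ?_⟩
        obtain ⟨σ, hσ, hA⟩ := coordA (a i) (p.2 i) hai
        refine ⟨σ, hσ, fun y w hy hw hyw => ?_⟩
        have := hA y w hy hw hyw
        rw [hp1]; ring_nf; ring_nf at this; linarith
      · have ha0 : a i = 0 := le_antisymm (not_lt.mp hai) (hab.1 i)
        by_cases hbi : 0 < b i
        · have hp2 : p.2 i = 0 := h2 i hbi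
          refine ⟨fun _ => 0, fun _ => b i, fun _ => le_refl 0, fun _ => hab.2.1 i,
            fun _ => zero_mul _, by rw [ha0]; exact tendsto_const_nhds, tendsto_const_nhds,
            fun k => ?_⟩
          obtain ⟨σ, hσ, hB⟩ := coordB (b i) (p.1 i) hbi
          refine ⟨σ, hσ, fun y w hy hw hyw => ?_⟩
          have := hB y w hy hw hyw
          rw [hp2]; ring_nf; ring_nf at this; linarith
        · have hb0 : b i = 0 := le_antisymm (not_lt.mp hbi) (hab.2.1 i)
          by_cases hpp : p.1 i ≤ 0 ∧ p.2 i ≤ 0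
          · refine ⟨fun _ => 0, fun _ => 0, fun _ => le_refl 0, fun _ => le_refl 0,
              fun _ => mul_zero _, by rw [ha0]; exact tendsto_const_nhds,
              by rw [hb0]; exact tendsto_const_nhds, fun k => ?_⟩
            refine ⟨0, le_refl 0, fun y w hy hw hyw => ?_⟩
            have := add_nonpos (mul_nonpos_of_nonpos_of_nonneg hpp.1 hy)
              (mul_nonpos_of_nonpos_of_nonneg hpp.2 hw)
            show p.1 i * (y - 0) + p.2 i * (w - 0) ≤ 0 * ((y - 0) ^ 2 + (w - 0) ^ 2)
            nlinarith
          · have hor := h3 i ha0 hb0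
            have hmul : p.1 i * p.2 i = 0 := by
              rcases hor with h | h
              · exact absurd ⟨h.1.le, h.2.le⟩ hpp
              · exact h
            by_cases hp2 : p.2 i = 0
            · refine ⟨fun _ => 0, t, fun _ => le_refl 0, fun k => (ht k).le,
                fun _ => zero_mul _, by rw [ha0]; exact tendsto_const_nhds,
                by rw [hb0]; exact htt, fun k => ?_⟩
              obtain ⟨σ, hσ, hB⟩ := coordB (t k) (p.1 i) (ht k)
              refine ⟨σ, hσ, fun y w hy hw hyw => ?_⟩
              have := hB y w hy hw hyw
              rw [hp2]; ring_nf; ring_nf at this; linarith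
            · have hp1 : p.1 i = 0 := by
                rcases mul_eq_zero.mp hmul with h | h
                · exact h
                · exact absurd h hp2
              refine ⟨t, fun _ => 0, fun k => (ht k).le, fun _ => le_refl 0,
                fun _ => mul_zero _, by rw [ha0]; exact htt,
                by rw [hb0]; exact tendsto_const_nhds, fun k => ?_⟩
              obtain ⟨σ, hσ, hA⟩ := coordA (t k) (p.2 i) (ht k)
              refine ⟨σ, hσ, fun y w hy hw hyw => ?_⟩
              have := hA y w hy hw hyw
              rw [hp1]; ring_nf; ring_nf at this; linarith
    choose c d hc hd hcd hct hdt hprox using hcoord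
    refine ⟨fun k => ((WithLp.toLp 2 (fun i => c i k) : V l), (WithLp.toLp 2 (fun i => d i k) : V l)), fun _ => p,
      fun k => ⟨?_, ?_⟩, ?_, tendsto_const_nhds⟩
    · exact mem_compCone_of _ _ (fun i => hc i k) (fun i => hd i k) (fun i => hcd i k)
    · exact prox_mem _ _ (fun i => hprox i k)
    · exact (tendsto_euclidean (f := fun k => WithLp.toLp 2 (fun i => c i k)) fun i => hct i).prodMk_nhds
        (tendsto_euclidean (f := fun k => WithLp.toLp 2 (fun i => d i k)) fun i => hdt i)


end
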